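/- Let f : ℝ → (0,∞) be integrable on [0,r] with r > 0, nondecreasing, and suppose f is differentiable at almost every point of (0,r). Then there exists r₀ ∈ (0,r) at which ln∘f is differentiable and (ln f(r) − ln f(0))/r ≥ (ln f)'(r₀) = f'(r₀)/f(r₀). -/

import Mathlib

open MeasureTheory Set Filter Topology

/-- Mean-value-type inequality for the a.e. derivative of `ln ∘ f`: if `f` is positive,
nondecreasing on `[0,r]` and differentiable almost everywhere on `(0,r)`, then there is
`r₀ ∈ (0,r)` where `f` (hence `ln ∘ f`) is differentiable and the average slope of
`ln ∘ f` over `[0,r]` dominates `(ln f)'(r₀) = f'(r₀)/f(r₀)`. -/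
theorem stmt5 (f : ℝ → ℝ) (r : ℝ) (hr : 0 < r)
    (hpos : ∀ x ∈ Icc 0 r, 0 < f x)
    (hmono : MonotoneOn f (Icc 0 r))
    (hdiff : ∀ᵐ x ∂(volume.restrict (Ioo 0 r)), DifferentiableAt ℝ f x) :
    ∃ r₀ ∈ Ioo 0 r, DifferentiableAt ℝ f r₀ ∧
      DifferentiableAt ℝ (fun x => Real.log (f x)) r₀ ∧
      (Real.log (f r) - Real.log (f 0)) / r ≥ deriv (fun x => Real.log (f x)) r₀ ∧
      deriv (fun x => Real.log (f x)) r₀ = deriv f r₀ / f r₀ := by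
  classical
  set L : ℝ := (Real.log (f r) - Real.log (f 0)) / r with hL
  -- the clamp function
  set c : ℝ → ℝ := fun x => min (max x 0) r with hc
  have hcmem : ∀ x, c x ∈ Icc 0 r := fun x =>
    ⟨le_min (le_max_right _ _) hr.le, min_le_right _ _⟩
  have hcmono : Monotone c := fun a b hab =>
    min_le_min (max_le_max hab le_rfl) le_rfl
  -- the globally monotone extension of `log ∘ f`
  set g : ℝ → ℝ := fun x => Real.log (f (c x)) with hgdef
  have hgmono : Monotone g := by
    intro a b hab
    exact Real.log_le_log (hpos _ (hcmem a)) (hmono (hcmem a) (hcmem b) (hcmono hab))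
  have hc0 : c 0 = 0 := by simp [hc, hr.le]
  have hcr : c r = r := by simp [hc, hr.le]
  have hg0 : g 0 = Real.log (f 0) := by rw [hgdef]; simp [hc0]
  have hgr : g r = Real.log (f r) := by rw [hgdef]; simp [hcr]
  -- on Ioo 0 r, g coincides with log ∘ f
  have hgeq : ∀ x ∈ Ioo 0 r, g =ᶠ[nhds x] fun y => Real.log (f y) := by
    intro x hx
    filter_upwards [isOpen_Ioo.mem_nhds hx] with y hy
    have : c y = y := by
      simp [hc, max_eq_left hy.1.le, min_eq_left hy.2.le]
    simp [hgdef, this]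
  have hL0 : 0 ≤ L := by
    rw [hL]
    apply div_nonneg _ hr.le
    have := hmono (left_mem_Icc.2 hr.le) (right_mem_Icc.2 hr.le) hr.le
    have := Real.log_le_log (hpos 0 (left_mem_Icc.2 hr.le)) this
    linarith
  by_contra hcon
  push_neg at hcon
  -- every differentiability point in Ioo 0 r has deriv (log ∘ f) > L
  have key : ∀ x ∈ Ioo 0 r, DifferentiableAt ℝ f x →
      L < deriv (fun y => Real.log (f y)) x := by
    intro x hx hdf
    have hfx : 0 < f x := hpos x ⟨hx.1.le, hx.2.le⟩
    have hlog : HasDerivAt (fun y => Real.log (f y)) (deriv f x / f x) x :=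
      hdf.hasDerivAt.log hfx.ne'
    have h1 : DifferentiableAt ℝ (fun y => Real.log (f y)) x := hlog.differentiableAt
    have h2 : deriv (fun y => Real.log (f y)) x = deriv f x / f x := hlog.deriv
    by_contra hnot
    push_neg at hnot
    exact (hcon x hx hdf h1 hnot) h2
  -- a.e. derivative of the monotone extension
  have hae := hgmono.ae_hasDerivAt
  set μ := hgmono.stieltjesFunction.measure with hμ
  set D : ℝ → ℝ := fun x => (Measure.rnDeriv μ volume x).toReal with hD
  have haerestrict : ∀ᵐ x ∂(volume.restrict (Ioo 0 r)),
      DifferentiableAt ℝ f x ∧ HasDerivAt g (D x) x :=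
    hdiff.and (ae_restrict_of_ae hae)
  -- a.e. on Ioo 0 r, rnDeriv > L
  have hlt : ∀ᵐ x ∂(volume.restrict (Ioo 0 r)),
      ENNReal.ofReal L < Measure.rnDeriv μ volume x := by
    filter_upwards [haerestrict,
      (ae_restrict_mem measurableSet_Ioo : ∀ᵐ x ∂(volume.restrict (Ioo 0 r)), x ∈ Ioo 0 r)]
      with x hx hmem
    obtain ⟨hdf, hgd⟩ := hx
    have hgd' : HasDerivAt (fun y => Real.log (f y)) (D x) x :=
      hgd.congr_of_eventuallyEq (hgeq x hmem).symm
    have hDx : D x = deriv (fun y => Real.log (f y)) x := hgd'.deriv.symm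
    have hLD : L < D x := hDx ▸ key x hmem hdf
    by_cases hfin : Measure.rnDeriv μ volume x = ⊤
    · rw [hfin]; exact (ENNReal.ofReal_lt_top).trans_le le_top
    · rw [← ENNReal.ofReal_toReal hfin]
      exact ENNReal.ofReal_lt_ofReal_iff_of_nonneg hL0 |>.2 hLD
  -- strict inequality of lintegrals
  have hμIoo : volume (Ioo (0:ℝ) r) ≠ 0 := by
    rw [Real.volume_Ioo]
    simp [hr, ENNReal.ofReal_pos]
  have hconstlint : ∫⁻ _ in Ioo 0 r, ENNReal.ofReal L ∂volume
      = ENNReal.ofReal L * ENNReal.ofReal r := by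
    rw [lintegral_const, Measure.restrict_apply_univ, Real.volume_Ioo, sub_zero]
  have hstrict : ∫⁻ _ in Ioo 0 r, ENNReal.ofReal L ∂volume
      < ∫⁻ x in Ioo 0 r, Measure.rnDeriv μ volume x ∂volume := by
    refine lintegral_strict_mono ?_ (Measure.measurable_rnDeriv μ volume).aemeasurable ?_ hlt
    · rw [Ne, Measure.restrict_eq_zero]; exact hμIoo
    · rw [hconstlint]; exact ENNReal.mul_ne_top ENNReal.ofReal_ne_top ENNReal.ofReal_ne_top
  -- upper bound via the Stieltjes measure
  have hupper : ∫⁻ x in Ioo 0 r, Measure.rnDeriv μ volume x ∂volume ≤ μ (Ioo 0 r) :=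
    Measure.setLIntegral_rnDeriv_le _
  have hconstright : Function.rightLim g r = g r := by
    apply rightLim_eq_of_tendsto
    have hev : g =ᶠ[𝓝[>] r] fun _ => g r := by
      filter_upwards [self_mem_nhdsWithin] with y hy
      have hy' : r ≤ y := le_of_lt hy
      have : c y = r := by
        simp [hc, max_eq_left (hr.le.trans hy'), min_eq_right hy']
      simp [hgdef, this, hcr]
    exact Tendsto.congr' hev.symm tendsto_const_nhds
  have hμval : μ (Ioo 0 r) ≤ ENNReal.ofReal (g r - g 0) := by
    rw [hμ, StieltjesFunction.measure_Ioo]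
    apply ENNReal.ofReal_le_ofReal
    have h1 : Function.leftLim (hgmono.stieltjesFunction) r ≤ g r := by
      have h2 : Function.leftLim (hgmono.stieltjesFunction) r ≤ hgmono.stieltjesFunction r :=
        hgmono.stieltjesFunction.mono.leftLim_le le_rfl
      rw [hgmono.stieltjesFunction_eq, hconstright] at h2
      exact h2
    have h3 : g 0 ≤ hgmono.stieltjesFunction 0 := by
      rw [hgmono.stieltjesFunction_eq]
      exact hgmono.le_rightLim le_rfl
    linarith
  have hfinal : ENNReal.ofReal L * ENNReal.ofReal r < ENNReal.ofReal L * ENNReal.ofReal r := by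
    calc ENNReal.ofReal L * ENNReal.ofReal r
        = ∫⁻ _ in Ioo 0 r, ENNReal.ofReal L ∂volume := hconstlint.symm
      _ < ∫⁻ x in Ioo 0 r, Measure.rnDeriv μ volume x ∂volume := hstrict
      _ ≤ μ (Ioo 0 r) := hupper
      _ ≤ ENNReal.ofReal (g r - g 0) := hμval
      _ = ENNReal.ofReal (L * r) := by
          rw [hgr, hg0, hL, div_mul_cancel₀]
          exact hr.ne'
      _ = ENNReal.ofReal L * ENNReal.ofReal r := ENNReal.ofReal_mul hL0
  exact lt_irrefl _ hfinal
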